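/- Let h > 0, a ≠ 0 with ‖a‖ = √(2h), β ∈ (0,1), and suppose x, y, z belong to the cone C_a(β) in a real inner product space with ‖x‖ = ‖z‖ = ρ and ‖y‖ = λρ for λ ∈ (0,1). If φ_h(x,y) ≥ √(2h)‖y−x‖, φ_h(y,z) ≥ √(2h)‖z−y‖, and φ_h(x,z) ≤ √(2h)‖z−x‖ + m for a constant m > 0, then φ_h(x,y) + φ_h(y,z) − φ_h(x,z) > 2√(2h)·((1 − √(1−β²)) − λ)·ρ − m. -/

import Mathlib

set_option maxHeartbeats 1000000


open RealInnerProductSpace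

/-- Cone estimate: two vectors of norm `ρ` in the cone `C_a β` have inner
product at least `(2β² - 1) ρ²`. -/
lemma cone_inner_ge {E : Type*} [NormedAddCommGroup E] [InnerProductSpace ℝ E]
    (a : E) (ha : a ≠ 0) (β ρ : ℝ) (hβ0 : 0 ≤ β) (hβ1 : β < 1) (hρ : 0 < ρ)
    (x z : E) (hxn : ‖x‖ = ρ) (hzn : ‖z‖ = ρ)
    (hx : ⟪x, a⟫ ≥ β * ‖x‖ * ‖a‖) (hz : ⟪z, a⟫ ≥ β * ‖z‖ * ‖a‖) :
    ⟪x, z⟫ ≥ (2 * β ^ 2 - 1) * ρ ^ 2 := by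
  have hapos : 0 < ‖a‖ := norm_pos_iff.mpr ha
  set u : E := ‖a‖⁻¹ • a with hu
  have hun : ‖u‖ = 1 := by
    rw [hu, norm_smul, norm_inv, norm_norm, inv_mul_cancel₀ hapos.ne']
  have hs : ⟪x, u⟫ ≥ β * ρ := by
    rw [hu, real_inner_smul_right]
    rw [ge_iff_le, ← mul_le_mul_iff_of_pos_right hapos]
    calc β * ρ * ‖a‖ = β * ‖x‖ * ‖a‖ := by rw [hxn]
      _ ≤ ⟪x, a⟫ := hx
      _ = ‖a‖⁻¹ * ⟪x, a⟫ * ‖a‖ := by field_simp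
  have ht : ⟪z, u⟫ ≥ β * ρ := by
    rw [hu, real_inner_smul_right]
    rw [ge_iff_le, ← mul_le_mul_iff_of_pos_right hapos]
    calc β * ρ * ‖a‖ = β * ‖z‖ * ‖a‖ := by rw [hzn]
      _ ≤ ⟪z, a⟫ := hz
      _ = ‖a‖⁻¹ * ⟪z, a⟫ * ‖a‖ := by field_simp
  set s : ℝ := ⟪x, u⟫ with hsdef
  set t : ℝ := ⟪z, u⟫ with htdef
  have hbρ : 0 ≤ β * ρ := by positivity
  have hx' : ‖x - s • u‖ ^ 2 = ρ ^ 2 - s ^ 2 := by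
    rw [norm_sub_sq_real, real_inner_smul_right, norm_smul, hxn, hun]
    simp only [Real.norm_eq_abs, mul_one, mul_pow, sq_abs, ← hsdef]
    ring
  have hz' : ‖z - t • u‖ ^ 2 = ρ ^ 2 - t ^ 2 := by
    rw [norm_sub_sq_real, real_inner_smul_right, norm_smul, hzn, hun]
    simp only [Real.norm_eq_abs, mul_one, mul_pow, sq_abs, ← htdef]
    ring
  have hcs : |⟪x - s • u, z - t • u⟫| ≤ ‖x - s • u‖ * ‖z - t • u‖ :=
    abs_real_inner_le_norm _ _
  have hux : ⟪u, x⟫ = s := (real_inner_comm u x).symm ▸ rfl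
  have huz : ⟪u, z⟫ = t := (real_inner_comm u z).symm ▸ rfl
  have huu : ⟪u, u⟫ = (1:ℝ) := by rw [real_inner_self_eq_norm_sq, hun]; norm_num
  have hinner : ⟪x - s • u, z - t • u⟫ = ⟪x, z⟫ - s * t := by
    simp only [inner_sub_left, inner_sub_right, real_inner_smul_left,
      real_inner_smul_right, hux, huz, huu, ← htdef]
    ring
  have h3 : (⟪x, z⟫ - s * t) ^ 2 ≤ (ρ ^ 2 - s ^ 2) * (ρ ^ 2 - t ^ 2) := by
    calc (⟪x, z⟫ - s * t) ^ 2 = |⟪x - s • u, z - t • u⟫| ^ 2 := by rw [sq_abs, hinner]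
      _ ≤ (‖x - s • u‖ * ‖z - t • u‖) ^ 2 :=
          pow_le_pow_left₀ (abs_nonneg _) hcs 2
      _ = (ρ ^ 2 - s ^ 2) * (ρ ^ 2 - t ^ 2) := by rw [mul_pow, hx', hz']
  clear_value u s t
  have hs2 : β * ρ * (β * ρ) ≤ s * s := mul_self_le_mul_self hbρ hs
  have ht2 : β * ρ * (β * ρ) ≤ t * t := mul_self_le_mul_self hbρ ht
  have h1 : ρ ^ 2 - s ^ 2 ≤ (1 - β ^ 2) * ρ ^ 2 := by nlinarith
  have h2 : ρ ^ 2 - t ^ 2 ≤ (1 - β ^ 2) * ρ ^ 2 := by nlinarith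
  have hst : s * t ≥ β ^ 2 * ρ ^ 2 := by
    have := mul_le_mul hs ht hbρ (le_trans hbρ hs)
    nlinarith
  have hC : 0 < (1 - β ^ 2) * ρ ^ 2 := mul_pos (by nlinarith) (pow_pos hρ 2)
  have h4 : (⟪x, z⟫ - s * t) ^ 2 ≤ ((1 - β ^ 2) * ρ ^ 2) ^ 2 := by
    have hnn : 0 ≤ ρ ^ 2 - s ^ 2 := by
      rw [← hx']; positivity
    have hnn2 : 0 ≤ ρ ^ 2 - t ^ 2 := by
      rw [← hz']; positivity
    nlinarith
  have h5 : ⟪x, z⟫ - s * t ≥ -((1 - β ^ 2) * ρ ^ 2) := by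
    nlinarith [sq_nonneg (⟪x, z⟫ - s * t + (1 - β ^ 2) * ρ ^ 2)]
  nlinarith

/-- Equality in `‖x - y‖ ≥ ‖x‖ - ‖y‖` forces `y` to be a positive multiple of `x`. -/
lemma eq_case {E : Type*} [NormedAddCommGroup E] [InnerProductSpace ℝ E]
    (x y : E) (ρ lam : ℝ) (hρ : 0 < ρ) (hlam0 : 0 < lam)
    (hxn : ‖x‖ = ρ) (hyn : ‖y‖ = lam * ρ) (heq : ‖y - x‖ = ρ - lam * ρ) :
    y = lam • x := by
  have h1 : ⟪x, y⟫ = ‖x‖ * ‖y‖ := by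
    have := norm_sub_sq_real y x
    rw [heq, hxn, hyn] at this
    rw [hxn, hyn, real_inner_comm]
    nlinarith [this]
  have h2 : ‖y‖ • x = ‖x‖ • y := inner_eq_norm_mul_iff_real.mp h1
  rw [hxn, hyn] at h2
  have h3 : ρ • y = ρ • (lam • x) := by
    rw [smul_smul, mul_comm]
    exact h2.symm
  exact smul_right_injective E hρ.ne' h3

/-- Lower bound for the excess of the action potential `φ_h` in a cone. -/
theorem stmt11 {E : Type*} [NormedAddCommGroup E] [InnerProductSpace ℝ E]
    (h : ℝ) (hh : 0 < h) (a : E) (ha : a ≠ 0) (hna : ‖a‖ = Real.sqrt (2 * h))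
    (β : ℝ) (hβ : β ∈ Set.Ioo (0:ℝ) 1)
    (x y z : E) (ρ lam m : ℝ) (hρ : 0 < ρ) (hlam : lam ∈ Set.Ioo (0:ℝ) 1)
    (hm : 0 < m)
    (hx : ⟪x, a⟫ ≥ β * ‖x‖ * ‖a‖)
    (hy : ⟪y, a⟫ ≥ β * ‖y‖ * ‖a‖)
    (hz : ⟪z, a⟫ ≥ β * ‖z‖ * ‖a‖)
    (hxn : ‖x‖ = ρ) (hzn : ‖z‖ = ρ) (hyn : ‖y‖ = lam * ρ)
    (φ : E → E → ℝ)
    (hφ1 : φ x y ≥ Real.sqrt (2 * h) * ‖y - x‖)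
    (hφ2 : φ y z ≥ Real.sqrt (2 * h) * ‖z - y‖)
    (hφ3 : φ x z ≤ Real.sqrt (2 * h) * ‖z - x‖ + m) :
    φ x y + φ y z - φ x z >
      2 * Real.sqrt (2 * h) * ((1 - Real.sqrt (1 - β ^ 2)) - lam) * ρ - m := by
  obtain ⟨hβ0, hβ1⟩ := hβ
  obtain ⟨hlam0, hlam1⟩ := hlam
  have hK : 0 < Real.sqrt (2 * h) := Real.sqrt_pos.mpr (by linarith)
  set K := Real.sqrt (2 * h) with hKdef
  have hb2 : 0 < 1 - β ^ 2 := by nlinarith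
  have hsq : Real.sqrt (1 - β ^ 2) ^ 2 = 1 - β ^ 2 := Real.sq_sqrt hb2.le
  have hsqpos : 0 < Real.sqrt (1 - β ^ 2) := Real.sqrt_pos.mpr hb2
  -- cone estimate : ‖z - x‖ ≤ 2 ρ √(1-β²)
  have hzx : ‖z - x‖ ≤ 2 * ρ * Real.sqrt (1 - β ^ 2) := by
    have hin : ⟪x, z⟫ ≥ (2 * β ^ 2 - 1) * ρ ^ 2 :=
      cone_inner_ge a ha β ρ hβ0.le hβ1 hρ x z hxn hzn hx hz
    have hns : ‖z - x‖ ^ 2 = 2 * ρ ^ 2 - 2 * ⟪x, z⟫ := by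
      rw [norm_sub_sq_real, hxn, hzn, real_inner_comm]; ring
    have hb : ‖z - x‖ ^ 2 ≤ (2 * ρ * Real.sqrt (1 - β ^ 2)) ^ 2 := by
      rw [hns, mul_pow, mul_pow, hsq]; nlinarith
    nlinarith [hb, norm_nonneg (z - x), mul_pos (mul_pos two_pos hρ) hsqpos]
  -- lower bounds on the two legs
  have hyx : ‖y - x‖ ≥ ρ - lam * ρ := by
    have := norm_sub_norm_le x y
    rw [hxn, hyn] at this
    calc ρ - lam * ρ ≤ ‖x - y‖ := this
      _ = ‖y - x‖ := norm_sub_rev x y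
  have hzy : ‖z - y‖ ≥ ρ - lam * ρ := by
    have := norm_sub_norm_le z y
    rw [hzn, hyn] at this
    linarith
  -- strict triangle-excess estimate
  have hS : ‖y - x‖ + ‖z - y‖ - ‖z - x‖ > 2 * ((1 - Real.sqrt (1 - β ^ 2)) - lam) * ρ := by
    by_cases hxz : x = z
    · subst hxz
      simp only [sub_self, norm_zero]
      have hrev : ‖x - y‖ = ‖y - x‖ := norm_sub_rev x y
      nlinarith
    · have hstrict : ‖y - x‖ + ‖z - y‖ > 2 * (ρ - lam * ρ) := by
        rcases lt_or_eq_of_le hyx with h1 | h1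
        · linarith
        · rcases lt_or_eq_of_le hzy with h2 | h2
          · linarith
          · exfalso
            have e1 : y = lam • x := eq_case x y ρ lam hρ hlam0 hxn hyn h1.symm
            have h2' : ‖y - z‖ = ρ - lam * ρ := by rw [norm_sub_rev]; exact h2.symm
            have e2 : y = lam • z := eq_case z y ρ lam hρ hlam0 hzn hyn h2'
            apply hxz
            have : lam • x = lam • z := e1 ▸ e2
            exact smul_right_injective E hlam0.ne' this
      nlinarith
  -- conclude
  have hdist : K * (‖y - x‖ + ‖z - y‖ - ‖z - x‖) =
      K * ‖y - x‖ + K * ‖z - y‖ - K * ‖z - x‖ := by ring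
  have hmain : φ x y + φ y z - φ x z ≥ K * (‖y - x‖ + ‖z - y‖ - ‖z - x‖) - m := by
    rw [hdist]; linarith
  have hlt := mul_lt_mul_of_pos_left hS hK
  have hE : K * (2 * ((1 - Real.sqrt (1 - β ^ 2)) - lam) * ρ) =
      2 * K * ((1 - Real.sqrt (1 - β ^ 2)) - lam) * ρ := by ring
  linarith
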